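/- For a > 0 and all real x, the polynomial P(x) = (1/sqrt(a^2+1)) * ( -(a+sqrt(a^2+1)) x^2 - i x + sqrt(a^2+1) ) satisfies |P(x)|^2 = 1 + ((a + sqrt(a^2+1))^2/(a^2+1)) * x^2 (x^2 - 1). In particular |P(x)| <= 1 for x in [-1,1], with equality exactly at x in {-1, 0, 1}. -/

import Mathlib

/-- Modulus identity for the degree-2 extremal polynomial, with the consequent bound on
`[-1,1]` and characterization of the equality points. -/
theorem stmt17 (a : ℝ) (ha : 0 < a) :
    ∀ x : ℝ,
      ‖((1 / (Real.sqrt (a ^ 2 + 1) : ℂ)) *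
          (-(((a : ℝ) + Real.sqrt (a ^ 2 + 1) : ℝ) : ℂ) * (x : ℂ) ^ 2 -
            Complex.I * (x : ℂ) + (Real.sqrt (a ^ 2 + 1) : ℂ)))‖ ^ 2 =
        1 + ((a + Real.sqrt (a ^ 2 + 1)) ^ 2 / (a ^ 2 + 1)) * (x ^ 2 * (x ^ 2 - 1)) ∧
      (x ∈ Set.Icc (-1 : ℝ) 1 →
        (‖((1 / (Real.sqrt (a ^ 2 + 1) : ℂ)) *
            (-(((a : ℝ) + Real.sqrt (a ^ 2 + 1) : ℝ) : ℂ) * (x : ℂ) ^ 2 -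
              Complex.I * (x : ℂ) + (Real.sqrt (a ^ 2 + 1) : ℂ)))‖ ≤ 1 ∧
          (‖((1 / (Real.sqrt (a ^ 2 + 1) : ℂ)) *
              (-(((a : ℝ) + Real.sqrt (a ^ 2 + 1) : ℝ) : ℂ) * (x : ℂ) ^ 2 -
                Complex.I * (x : ℂ) + (Real.sqrt (a ^ 2 + 1) : ℂ)))‖ = 1 ↔
            x = -1 ∨ x = 0 ∨ x = 1))) := by
  intro x
  set s := Real.sqrt (a ^ 2 + 1) with hs_def
  have hs2 : s ^ 2 = a ^ 2 + 1 := Real.sq_sqrt (by positivity)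
  have hs0 : 0 < s := Real.sqrt_pos.mpr (by positivity)
  set z : ℂ := (1 / (s : ℂ)) *
      (-(((a : ℝ) + s : ℝ) : ℂ) * (x : ℂ) ^ 2 - Complex.I * (x : ℂ) + (s : ℂ)) with hz
  have hkey : ‖z‖ ^ 2 =
      1 + ((a + s) ^ 2 / (a ^ 2 + 1)) * (x ^ 2 * (x ^ 2 - 1)) := by
    rw [Complex.sq_norm, hz, Complex.normSq_apply]
    simp [← Complex.ofReal_pow, Complex.add_re, Complex.add_im, Complex.mul_re, Complex.mul_im,
      Complex.ofReal_re, Complex.ofReal_im, Complex.I_re, Complex.I_im, Complex.normSq_apply]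
    field_simp
    nlinarith [hs2, hs0, sq_nonneg x, sq_nonneg (x*s)]
  refine ⟨hkey, fun hx => ?_⟩
  obtain ⟨hx1, hx2⟩ := hx
  have hC : 0 < (a + s) ^ 2 / (a ^ 2 + 1) := by positivity
  have hfac : x ^ 2 * (x ^ 2 - 1) ≤ 0 := by
    have h1 : x ^ 2 ≤ 1 := by nlinarith
    nlinarith [sq_nonneg x]
  have habs_nonneg : 0 ≤ ‖z‖ := norm_nonneg z
  have hle : ‖z‖ ≤ 1 := by nlinarith [hkey, mul_nonpos_of_nonneg_of_nonpos hC.le hfac]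
  refine ⟨hle, ?_⟩
  constructor
  · intro h
    have h2 : ((a + s) ^ 2 / (a ^ 2 + 1)) * (x ^ 2 * (x ^ 2 - 1)) = 0 := by
      rw [h] at hkey; linarith
    have h3 : x ^ 2 * (x ^ 2 - 1) = 0 := by
      rcases mul_eq_zero.mp h2 with h | h
      · exact absurd h (ne_of_gt hC)
      · exact h
    rcases mul_eq_zero.mp h3 with h | h
    · exact Or.inr (Or.inl (pow_eq_zero_iff (by norm_num) |>.mp h))
    · have : x ^ 2 = 1 := by linarith
      have hfac2 : (x - 1) * (x + 1) = 0 := by linear_combination this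
      rcases mul_eq_zero.mp hfac2 with h | h
      · exact Or.inr (Or.inr (by linarith))
      · exact Or.inl (by linarith)
  · intro h
    have h3 : x ^ 2 * (x ^ 2 - 1) = 0 := by
      rcases h with h | h | h <;> rw [h] <;> ring
    have : ‖z‖ ^ 2 = 1 := by rw [hkey, h3]; ring
    nlinarith [habs_nonneg]
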